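/- arXiv:2502.05496 — 2 statements merged into one kernel-verified Lean document; each statement's English description precedes it below -/
import Mathlib

section
/- Let E be a real inner product space, let Θ, p, q ∈ E, and let λ, μ be real numbers with λ ≥ μ ≥ 1. If ⟨p − q, p − Θ⟩ ≥ 0, then ‖(Θ + λ·(p − Θ)) − (Θ + μ·(q − Θ))‖ ≥ ‖p − q‖. -/
/-- If particles `p` and `q` move radially away from `Θ` with scaling factors
`λ ≥ μ ≥ 1` and `⟨p - q, p - Θ⟩ ≥ 0`, then their distance does not decrease. -/
theorem dist_nondecreasing_after_radial_scaling
    {E : Type*} [NormedAddCommGroup E] [InnerProductSpace ℝ E]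
    (Θ p q : E) (lam mu : ℝ) (hmu : 1 ≤ mu) (hlm : mu ≤ lam)
    (h : 0 ≤ (inner ℝ (p - q) (p - Θ) : ℝ)) :
    ‖(Θ + lam • (p - Θ)) - (Θ + mu • (q - Θ))‖ ≥ ‖p - q‖ := by
  have hv : (Θ + lam • (p - Θ)) - (Θ + mu • (q - Θ))
      = mu • (p - q) + (lam - mu) • (p - Θ) := by
    simp only [sub_smul, smul_sub]
    abel
  rw [hv, ge_iff_le, ← Real.sqrt_sq (norm_nonneg (p - q)),
    ← Real.sqrt_sq (norm_nonneg (mu • (p - q) + (lam - mu) • (p - Θ)))]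
  apply Real.sqrt_le_sqrt
  · have hsq := norm_add_sq_real (mu • (p - q)) ((lam - mu) • (p - Θ))
    rw [norm_smul, norm_smul, real_inner_smul_left, real_inner_smul_right,
      Real.norm_eq_abs, Real.norm_eq_abs,
      abs_of_nonneg (le_trans zero_le_one hmu), abs_of_nonneg (sub_nonneg.2 hlm)] at hsq
    have := norm_nonneg (p - Θ)
    have := norm_nonneg (p - q)
    have h1 : ‖p - q‖ ^ 2 ≤ (mu * ‖p - q‖) ^ 2 := by
      nlinarith [mul_nonneg (mul_nonneg (sub_nonneg.2 hmu) (by linarith : (0:ℝ) ≤ mu + 1)) (sq_nonneg ‖p - q‖)]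
    nlinarith [sq_nonneg ((lam - mu) * ‖p - Θ‖),
      mul_nonneg (mul_nonneg (le_trans zero_le_one hmu) (sub_nonneg.2 hlm)) h]
end

section
/- Let E be a real inner product space, let Θ, p, q ∈ E with ‖p − Θ‖ = ‖q − Θ‖, and let λ, μ be real numbers with λ ≥ 1 and μ ≥ 1. Then ‖(Θ + λ·(p − Θ)) − (Θ + μ·(q − Θ))‖ ≥ ‖p − q‖. -/
/-- If `p` and `q` are equidistant from `Θ` and move radially away from `Θ` with
scaling factors `λ ≥ 1`, `μ ≥ 1`, their distance does not decrease. -/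
theorem dist_nondecreasing_equidistant_radial_scaling
    {E : Type*} [NormedAddCommGroup E] [InnerProductSpace ℝ E]
    (Θ p q : E) (heq : ‖p - Θ‖ = ‖q - Θ‖)
    (lam mu : ℝ) (hlam : 1 ≤ lam) (hmu : 1 ≤ mu) :
    ‖(Θ + lam • (p - Θ)) - (Θ + mu • (q - Θ))‖ ≥ ‖p - q‖ := by
  set a := p - Θ with ha
  set b := q - Θ with hb
  have hpq : p - q = a - b := by rw [ha, hb]; abel
  have hsub : (Θ + lam • a) - (Θ + mu • b) = lam • a - mu • b := by abel
  rw [hpq, hsub]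
  have h1 := real_inner_le_norm a b
  have e1 := @norm_sub_sq_real E _ _ a b
  have e2 := @norm_sub_sq_real E _ _ (lam • a) (mu • b)
  rw [norm_smul, norm_smul, real_inner_smul_left, real_inner_smul_right,
    Real.norm_eq_abs, Real.norm_eq_abs, abs_of_pos (by linarith : (0:ℝ) < lam),
    abs_of_pos (by linarith : (0:ℝ) < mu)] at e2
  have hn1 := norm_nonneg (a - b)
  have hn2 := norm_nonneg (lam • a - mu • b)
  have hna := norm_nonneg a
  have h2 : 0 ≤ (lam * mu - 1) * (‖a‖ * ‖b‖ - inner ℝ a b) :=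
    mul_nonneg (by nlinarith) (by linarith)
  have h3 : 0 ≤ (lam - mu) ^ 2 * ‖a‖ ^ 2 := by positivity
  rw [← heq] at e1 e2 h1 h2
  nlinarith [h2, h3, mul_self_nonneg (‖a - b‖ - ‖lam • a - mu • b‖)]
end
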